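/- Let n, S be positive integers, P > 0 a real number, and set t_μ := μP/S for μ = 0,…,S. For each μ ∈ {0,…,S−1} let O_μ be an n×n complex matrix and h_μ : ℝ → ℝ a continuous function, and set θ_μ := 2·∫_{t_μ}^{t_{μ+1}} h_μ(t) dt. Suppose U : ℝ → Matrix n n ℂ is continuous on [0,P], satisfies U(0) = 1, and on each interval (t_μ, t_{μ+1}) is differentiable with U'(t) = −i·h_μ(t)·(O_μ · U(t)). Then U(P) = exp(−i·(θ_{S−1}/2)·O_{S−1}) · exp(−i·(θ_{S−2}/2)·O_{S−2}) ⋯ exp(−i·(θ_0/2)·O_0). -/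

import Mathlib

open scoped Matrix.Norms.L2Operator
open NormedSpace Set

lemma my_const_of_deriv_zero {E : Type*} [NormedAddCommGroup E] [NormedSpace ℝ E]
    {f : ℝ → E} {a b : ℝ} (hab : a ≤ b) (hcont : ContinuousOn f (Set.Icc a b))
    (hder : ∀ x ∈ Set.Ioo a b, HasDerivAt f 0 x) : f b = f a := by
  rcases eq_or_lt_of_le hab with rfl | hlt
  · rfl
  have key : ∀ x ∈ Set.Ioo a b, f b = f x := by
    intro x hx
    exact constant_of_has_deriv_right_zero
      (hcont.mono (Set.Icc_subset_Icc hx.1.le le_rfl))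
      (fun y hy => (hder y ⟨lt_of_lt_of_le hx.1 hy.1, hy.2⟩).hasDerivWithinAt)
      b (Set.right_mem_Icc.2 hx.2.le)
  have h1 : Filter.Tendsto f (nhdsWithin a (Set.Ioo a b)) (nhds (f a)) :=
    ((hcont a (Set.left_mem_Icc.2 hab)).mono_left (nhdsWithin_mono _ Set.Ioo_subset_Icc_self))
  have h2 : Filter.Tendsto f (nhdsWithin a (Set.Ioo a b)) (nhds (f b)) := by
    apply Filter.Tendsto.congr' _ tendsto_const_nhds
    filter_upwards [self_mem_nhdsWithin] with x hx
    exact key x hx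
  haveI : (nhdsWithin a (Set.Ioo a b)).NeBot := by
    rw [nhdsWithin_Ioo_eq_nhdsGT hlt]; infer_instance
  exact tendsto_nhds_unique h2 h1

lemma ode_step {n : ℕ} {a b : ℝ} (hab : a < b) (O : Matrix (Fin n) (Fin n) ℂ)
    {h : ℝ → ℝ} (hc : Continuous h) {U : ℝ → Matrix (Fin n) (Fin n) ℂ}
    (hUcont : ContinuousOn U (Set.Icc a b))
    (hder : ∀ t ∈ Set.Ioo a b, HasDerivAt U ((-Complex.I * (h t : ℂ)) • (O * U t)) t) :
    U b = exp ((-Complex.I * ((∫ t in a..b, h t : ℝ) : ℂ)) • O) * U a := by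
  set c : ℝ → ℂ := fun t => -Complex.I * ((∫ s in a..t, h s : ℝ) : ℂ) with hc_def
  have cder : ∀ t, HasDerivAt c (-Complex.I * (h t : ℂ)) t := by
    intro t
    have h1 : HasDerivAt (fun t => ∫ s in a..t, h s) (h t) t :=
      intervalIntegral.integral_hasDerivAt_right (hc.intervalIntegrable a t)
        hc.aestronglyMeasurable.stronglyMeasurableAtFilter hc.continuousAt
    simpa [hc_def, neg_mul] using (h1.ofReal_comp.const_mul (-Complex.I))
  have Dder : ∀ t, HasDerivAt (fun t => exp ((-(c t)) • O))
      ((Complex.I * (h t : ℂ)) • (O * exp ((-(c t)) • O))) t := by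
    intro t
    have hmap : HasDerivAt (fun z : ℂ => exp (z • O))
        (O * exp ((-(c t)) • O)) (-(c t)) := hasDerivAt_exp_smul_const' O (-(c t))
    have hcn : HasDerivAt (fun t => -(c t)) (Complex.I * (h t : ℂ)) t := by
      have := (cder t).neg; rw [neg_mul, neg_neg] at this; exact this
    simpa [Function.comp_def] using hmap.scomp t hcn
  set W : ℝ → Matrix (Fin n) (Fin n) ℂ := fun t => exp ((-(c t)) • O) * U t with hW_def
  have ccont : Continuous c := by
    rw [continuous_iff_continuousAt]; exact fun t => (cder t).continuousAt
  have Dcont : Continuous (fun t => exp ((-(c t)) • O)) := by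
    rw [continuous_iff_continuousAt]; exact fun t => (Dder t).continuousAt
  have Wcont : ContinuousOn W (Set.Icc a b) := Dcont.continuousOn.mul hUcont
  have Wder : ∀ t ∈ Set.Ioo a b, HasDerivAt W 0 t := by
    intro t ht
    have hd := (Dder t).mul (hder t ht)
    have hcomm : O * exp ((-(c t)) • O) = exp ((-(c t)) • O) * O :=
      (((Commute.refl O).smul_right (-(c t))).exp_right).eq
    have key : (Complex.I * (h t : ℂ)) • (O * exp ((-(c t)) • O)) * U t
        + exp ((-(c t)) • O) * ((-Complex.I * (h t : ℂ)) • (O * U t)) = 0 := by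
      rw [smul_mul_assoc, mul_smul_comm, ← mul_assoc, ← hcomm,
        show (-Complex.I * (h t : ℂ)) = -(Complex.I * (h t : ℂ)) by ring, mul_assoc]
      simp
    exact key ▸ hd
  have hWba : W b = W a := my_const_of_deriv_zero hab.le Wcont Wder
  have hWa : W a = U a := by
    simp [hW_def, hc_def, intervalIntegral.integral_same]
  have hinv : exp ((c b) • O) * exp ((-(c b)) • O) = 1 := by
    rw [← Matrix.exp_add_of_commute _ _ (((Commute.refl O).smul_left (c b)).smul_right (-(c b)))]
    simp
  have hkey : exp ((-(c b)) • O) * U b = U a := by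
    rw [show exp ((-(c b)) • O) * U b = W b from rfl, hWba, hWa]
  calc U b = exp ((c b) • O) * (exp ((-(c b)) • O) * U b) := by
        rw [← mul_assoc, hinv, one_mul]
    _ = _ := by rw [hkey]

/-- **Lemma 1 of the paper.** The piecewise Schrödinger evolution generated by
`H(t) = Σ_μ 1_{[t_μ, t_{μ+1}]}(t)·h_μ(t)·O_μ` over total time `P` equals the product of the
circuit gates `exp(-i(θ_μ/2)·O_μ)`, applied in series (gate `0` first). -/
theorem circuit_eq_piecewise_evolution (n S : ℕ) (hn : 0 < n) (hS : 0 < S)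
    (P : ℝ) (hP : 0 < P)
    (O : Fin S → Matrix (Fin n) (Fin n) ℂ)
    (h : Fin S → ℝ → ℝ) (hcont : ∀ μ, Continuous (h μ))
    (θ : Fin S → ℝ)
    (hθ : ∀ μ : Fin S, θ μ =
      2 * ∫ t in ((μ : ℝ) * P / S)..(((μ : ℝ) + 1) * P / S), h μ t)
    (U : ℝ → Matrix (Fin n) (Fin n) ℂ)
    (hUcont : ContinuousOn U (Set.Icc 0 P))
    (hU0 : U 0 = 1)
    (hUder : ∀ μ : Fin S, ∀ t ∈ Set.Ioo ((μ : ℝ) * P / S) (((μ : ℝ) + 1) * P / S),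
      HasDerivAt U ((-Complex.I * (h μ t : ℂ)) • (O μ * U t)) t) :
    U P = ((List.ofFn fun μ : Fin S =>
      NormedSpace.exp ((-Complex.I * ((θ μ / 2 : ℝ) : ℂ)) • O μ)).reverse).prod := by
  have hS' : (0:ℝ) < S := by exact_mod_cast hS
  set G : ℕ → Matrix (Fin n) (Fin n) ℂ := fun m =>
    if hm : m < S then
      NormedSpace.exp ((-Complex.I * ((θ ⟨m, hm⟩ / 2 : ℝ) : ℂ)) • O ⟨m, hm⟩) else 1
    with hG_def
  have main : ∀ k : ℕ, k ≤ S →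
      U ((k : ℝ) * P / S) = (((List.range k).map G).reverse).prod := by
    intro k
    induction k with
    | zero => intro _; simpa using hU0
    | succ k ih =>
      intro hk1
      have hkS : k < S := hk1
      set μ : Fin S := ⟨k, hkS⟩ with hμ
      have h0k : (0:ℝ) ≤ (k:ℝ) * P / S := by positivity
      have hab : (k : ℝ) * P / S < ((k : ℝ) + 1) * P / S := by
        apply div_lt_div_of_pos_right ?_ hS'
        nlinarith
      have hbP : ((k:ℝ)+1) * P / S ≤ P := by
        rw [div_le_iff₀ hS']
        nlinarith [show ((k:ℝ)+1) ≤ (S:ℝ) by exact_mod_cast hk1]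
      have hd : ∀ t ∈ Set.Ioo ((k:ℝ)*P/S) (((k:ℝ)+1)*P/S),
          HasDerivAt U ((-Complex.I * (h μ t : ℂ)) • (O μ * U t)) t := by
        simpa [hμ] using hUder μ
      have step := ode_step hab (O μ) (hcont μ)
        (hUcont.mono (Set.Icc_subset_Icc h0k hbP)) hd
      have hInt : (∫ t in ((k:ℝ)*P/S)..(((k:ℝ)+1)*P/S), h μ t) = θ μ / 2 := by
        have h2 := hθ μ
        simp only [hμ, Fin.val_mk] at h2
        rw [h2]; ring
      rw [hInt] at step
      have hcast : ((k+1 : ℕ) : ℝ) = (k:ℝ) + 1 := by push_cast; ring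
      rw [hcast, step, ih hkS.le]
      simp [List.range_succ, hG_def, dif_pos hkS, hμ]
  have hPS : ((S:ℕ) : ℝ) * P / S = P := by field_simp
  have := main S le_rfl
  rw [hPS] at this
  rw [this]
  congr 1
  congr 1
  apply List.ext_getElem
  · simp
  · intro i h1 h2
    simp only [List.getElem_map, List.getElem_range, List.getElem_ofFn, hG_def]
    rw [dif_pos (by simpa using h1)]
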